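/- Let 0 < α₁ < α₂ ≤ 1. There exists c > 0, depending only on α₁ and α₂, such that for all t ∈ (0, π/6]: (1/(2π)²) ∫_{ℝ²} exp( − ∫_{−t}^{0} ( |z₁ cos r − z₂ sin r|^{α₁} + |z₁ sin r + z₂ cos r|^{α₂} ) dr ) dz₁ dz₂ ≤ c t^{−1 − 2/α₂}. In particular, this quantity divided by t^{−1/α₁ − 1/α₂} is bounded by c t^{1/α₁ − 1/α₂ − 1}, which tends to 0 as t → 0⁺ when 1/α₁ − 1/α₂ > 1. -/

import Mathlib

open Real MeasureTheory

lemma stmt19_sin_lb {t u : ℝ} (ht : 0 < t) (ht6 : t ≤ π / 6) (h1 : t / 4 ≤ u)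
    (h2 : u ≤ π - t / 4) : t / 8 ≤ Real.sin u := by
  have hπ : (3 : ℝ) < π := Real.pi_gt_three
  have hπ' : π < 3.15 := Real.pi_lt_d2
  have h2pi : (1 : ℝ) / 2 ≤ 2 / π := by
    rw [div_le_div_iff₀ (by norm_num) (by linarith)]; linarith
  have h8 : t / 8 ≤ Real.sin (t / 4) := by
    have h := Real.mul_le_sin (x := t / 4) (by linarith) (by nlinarith)
    nlinarith
  have key : ∀ v : ℝ, t / 4 ≤ v → v ≤ π / 2 → t / 8 ≤ Real.sin v := by
    intro v hv1 hv2
    have := Real.sin_le_sin_of_le_of_le_pi_div_two (x := t / 4) (y := v)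
      (by nlinarith) hv2 hv1
    linarith
  rcases le_total u (π / 2) with hu | hu
  · exact key u h1 hu
  · have : t / 8 ≤ Real.sin (π - u) := key (π - u) (by linarith) (by linarith)
    rwa [Real.sin_pi_sub] at this

lemma stmt19_abs_sin_lb {t u : ℝ} (j : ℤ) (ht : 0 < t) (ht6 : t ≤ π / 6)
    (h1 : t / 4 ≤ u - j * π) (h2 : u - j * π ≤ π - t / 4) : t / 8 ≤ |Real.sin u| := by
  have h := Real.sin_add_int_mul_pi (u - j * π) j
  rw [sub_add_cancel] at h
  have hone : |((-1 : ℝ) ^ j)| = 1 := by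
    rcases Int.even_or_odd j with hj | hj
    · rw [hj.neg_one_zpow, abs_one]
    · rw [hj.neg_one_zpow, abs_neg, abs_one]
  have habs : |Real.sin u| = |Real.sin (u - j * π)| := by
    rw [h, abs_mul, hone, one_mul]
  rw [habs]
  exact (stmt19_sin_lb ht ht6 h1 h2).trans (le_abs_self _)

lemma stmt19_core {α t θ : ℝ} (hα0 : 0 < α) (ht : 0 < t) (ht6 : t ≤ π / 6) :
    t / 4 * (t / 8) ^ α ≤ ∫ u in (θ - t)..θ, |Real.sin u| ^ α := by
  have hπ : (3 : ℝ) < π := Real.pi_gt_three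
  have hcont : Continuous fun u : ℝ => |Real.sin u| ^ α :=
    Real.continuous_sin.abs.rpow_const fun x => Or.inr hα0.le
  -- find a good subinterval [a, a + t/4] and an integer j
  obtain ⟨a, j, ha1, ha2, hbound⟩ :
      ∃ (a : ℝ) (j : ℤ), θ - t ≤ a ∧ a + t / 4 ≤ θ ∧
        ∀ u ∈ Set.Icc a (a + t / 4), t / 4 ≤ u - j * π ∧ u - j * π ≤ π - t / 4 := by
    set m := θ - t / 2 with hm
    set k := round (m / π) with hk
    have hkm : |m - k * π| ≤ π / 2 := by
      have h := abs_sub_round (m / π)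
      have : m - k * π = (m / π - k) * π := by field_simp
      rw [this, abs_mul, abs_of_pos (by linarith : (0:ℝ) < π)]
      calc |m / π - ↑k| * π ≤ 1 / 2 * π := by
            exact mul_le_mul_of_nonneg_right h (by linarith)
        _ = π / 2 := by ring
    rw [abs_le] at hkm
    rcases le_or_gt ((k : ℝ) * π) m with hc | hc
    · refine ⟨θ - t / 4, k, by linarith, by linarith, fun u hu => ?_⟩
      obtain ⟨hu1, hu2⟩ := hu
      constructor
      · have : (k : ℝ) * π ≤ θ - t / 2 := hc
        linarith
      · have : θ - t / 2 - (k : ℝ) * π ≤ π / 2 := by linarith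
        linarith
    · refine ⟨θ - t, k - 1, by linarith, by linarith, fun u hu => ?_⟩
      obtain ⟨hu1, hu2⟩ := hu
      have hcast : ((k - 1 : ℤ) : ℝ) * π = (k : ℝ) * π - π := by push_cast; ring
      constructor
      · rw [hcast]
        have : -(π / 2) ≤ θ - t / 2 - (k : ℝ) * π := hkm.1
        linarith
      · rw [hcast]
        have : θ - t / 2 < (k : ℝ) * π := hc
        linarith
  calc t / 4 * (t / 8) ^ α = ∫ _ in a..(a + t / 4), (t / 8) ^ α := by
        rw [intervalIntegral.integral_const, smul_eq_mul, add_sub_cancel_left]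
    _ ≤ ∫ u in a..(a + t / 4), |Real.sin u| ^ α := by
        apply intervalIntegral.integral_mono_on (by linarith)
          intervalIntegrable_const (hcont.intervalIntegrable _ _)
        intro u hu
        apply Real.rpow_le_rpow (by positivity) _ hα0.le
        exact stmt19_abs_sin_lb j ht ht6 (hbound u hu).1 (hbound u hu).2
    _ ≤ ∫ u in (θ - t)..θ, |Real.sin u| ^ α := by
        apply intervalIntegral.integral_mono_interval ha1 (by linarith) ha2
          (ae_of_all _ fun u => by positivity) (hcont.intervalIntegrable _ _)

lemma stmt19_key {α t : ℝ} (hα0 : 0 < α) (hα1 : α ≤ 1) (ht : 0 < t) (ht6 : t ≤ π / 6)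
    (z₁ z₂ : ℝ) :
    1 / 256 * (t ^ (1 + α) * |z₁| ^ α) + 1 / 256 * (t * |z₂| ^ α)
      ≤ ∫ r in (-t)..(0 : ℝ), |z₁ * Real.sin r + z₂ * Real.cos r| ^ α := by
  have hπ : (3 : ℝ) < π := Real.pi_gt_three
  have hcont : Continuous fun r : ℝ => |z₁ * Real.sin r + z₂ * Real.cos r| ^ α :=
    ((continuous_const.mul Real.continuous_sin).add
      (continuous_const.mul Real.continuous_cos)).abs.rpow_const fun x => Or.inr hα0.le
  have htα : t ^ (1 + α) = t * t ^ α := by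
    rw [Real.rpow_add ht, Real.rpow_one]
  rcases le_or_gt (4 * t * |z₁|) |z₂| with hcase | hcase
  -- Case 1 : |z₂| dominates
  · have hpt : ∀ r ∈ Set.Icc (-t) (0 : ℝ), (|z₂| / 2) ^ α ≤ |z₁ * Real.sin r + z₂ * Real.cos r| ^ α := by
      intro r hr
      obtain ⟨hr1, hr2⟩ := hr
      apply Real.rpow_le_rpow (by positivity) _ hα0.le
      have hsin : |Real.sin r| ≤ t := by
        calc |Real.sin r| ≤ |r| := Real.abs_sin_le_abs
          _ ≤ t := by rw [abs_le]; constructor <;> linarith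
      have hcos : 3 / 4 ≤ Real.cos r := by
        have h1 : Real.cos t ≤ Real.cos (-r) := by
          apply Real.cos_le_cos_of_nonneg_of_le_pi (by linarith) (by linarith) (by linarith)
        have h2 : Real.cos (π / 6) ≤ Real.cos t := by
          apply Real.cos_le_cos_of_nonneg_of_le_pi ht.le (by linarith) ht6
        rw [Real.cos_neg] at h1
        have h3 : Real.cos (π / 6) = Real.sqrt 3 / 2 := Real.cos_pi_div_six
        nlinarith [Real.sq_sqrt (by norm_num : (3:ℝ) ≥ 0), Real.sqrt_nonneg 3]
      have h4t : t * |z₁| ≤ |z₂| / 4 := by linarith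
      calc |z₂| / 2 ≤ |z₂| * Real.cos r - |z₁| * |Real.sin r| := by
            have : |z₁| * |Real.sin r| ≤ |z₁| * t := by
              apply mul_le_mul_of_nonneg_left hsin (abs_nonneg _)
            nlinarith [abs_nonneg z₂]
        _ = |z₂ * Real.cos r| - |z₁ * Real.sin r| := by
            rw [abs_mul, abs_mul, abs_of_nonneg (by linarith : (0:ℝ) ≤ Real.cos r)]
        _ ≤ |z₁ * Real.sin r + z₂ * Real.cos r| := by
            have h := abs_add_le (-(z₁ * Real.sin r)) (z₁ * Real.sin r + z₂ * Real.cos r)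
            rw [neg_add_cancel_left, abs_neg] at h
            linarith
    have hS : t * (|z₂| / 2) ^ α ≤ ∫ r in (-t)..(0:ℝ), |z₁ * Real.sin r + z₂ * Real.cos r| ^ α := by
      calc t * (|z₂| / 2) ^ α = ∫ _ in (-t)..(0:ℝ), (|z₂| / 2) ^ α := by
            rw [intervalIntegral.integral_const, smul_eq_mul, sub_neg_eq_add, zero_add]
        _ ≤ _ := intervalIntegral.integral_mono_on (by linarith) intervalIntegrable_const
            (hcont.intervalIntegrable _ _) hpt
    refine le_trans ?_ hS
    have e1 : (|z₂| / 2) ^ α = |z₂| ^ α / 2 ^ α := Real.div_rpow (abs_nonneg _) (by norm_num) α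
    have e2 : (2 : ℝ) ^ α ≤ 2 := by
      calc (2:ℝ) ^ α ≤ 2 ^ (1:ℝ) := Real.rpow_le_rpow_of_exponent_le one_le_two hα1
        _ = 2 := Real.rpow_one 2
    have e3 : |z₂| ^ α / 2 ≤ (|z₂| / 2) ^ α := by
      rw [e1]
      gcongr
    have e4 : t ^ α * |z₁| ^ α ≤ |z₂| ^ α := by
      rw [← Real.mul_rpow ht.le (abs_nonneg _)]
      apply Real.rpow_le_rpow (by positivity) (by nlinarith [abs_nonneg z₁]) hα0.le
    have e5 : t ^ (1 + α) * |z₁| ^ α ≤ t * |z₂| ^ α := by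
      rw [htα, mul_assoc]
      exact mul_le_mul_of_nonneg_left e4 ht.le
    have e6 : t * (|z₂| ^ α / 2) ≤ t * (|z₂| / 2) ^ α :=
      mul_le_mul_of_nonneg_left e3 ht.le
    linarith [e5, e6, mul_nonneg ht.le (Real.rpow_nonneg (abs_nonneg z₂) α)]
  -- Case 2 : |z₁| dominates
  · have hz₁ : 0 < |z₁| := by
      rcases eq_or_ne z₁ 0 with h | h
      · exfalso; rw [h] at hcase; simp at hcase; exact absurd hcase (abs_nonneg z₂).not_gt
      · exact abs_pos.mpr h
    set w : ℂ := ⟨z₁, z₂⟩ with hw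
    have hw0 : w ≠ 0 := by
      intro h
      apply hz₁.ne'
      rw [abs_eq_zero]
      exact congrArg Complex.re h
    set ρ := ‖w‖ with hρ
    set θ := Complex.arg w with hθ
    have hρ1 : ρ * Real.cos θ = z₁ := Complex.norm_mul_cos_arg w
    have hρ2 : ρ * Real.sin θ = z₂ := Complex.norm_mul_sin_arg w
    have hρ0 : 0 ≤ ρ := norm_nonneg w
    have hρz : |z₁| ≤ ρ := by
      have := Complex.abs_re_le_norm w
      simpa using this
    have hpt : ∀ r : ℝ, |z₁ * Real.sin r + z₂ * Real.cos r| ^ α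
        = ρ ^ α * |Real.sin (r + θ)| ^ α := by
      intro r
      have : z₁ * Real.sin r + z₂ * Real.cos r = ρ * Real.sin (r + θ) := by
        rw [← hρ1, ← hρ2, Real.sin_add]; ring
      rw [this, abs_mul, abs_of_nonneg hρ0, Real.mul_rpow hρ0 (abs_nonneg _)]
    have hS : ∫ r in (-t)..(0:ℝ), |z₁ * Real.sin r + z₂ * Real.cos r| ^ α
        = ρ ^ α * ∫ u in (θ - t)..θ, |Real.sin u| ^ α := by
      rw [show (∫ r in (-t)..(0:ℝ), |z₁ * Real.sin r + z₂ * Real.cos r| ^ α)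
          = ∫ r in (-t)..(0:ℝ), ρ ^ α * |Real.sin (r + θ)| ^ α from
        intervalIntegral.integral_congr fun r _ => hpt r]
      rw [intervalIntegral.integral_const_mul]
      congr 1
      have := intervalIntegral.integral_comp_add_right (a := -t) (b := 0)
        (fun u => |Real.sin u| ^ α) θ
      rw [this]
      congr 1 <;> ring
    rw [hS]
    have hI : t / 4 * (t / 8) ^ α ≤ ∫ u in (θ - t)..θ, |Real.sin u| ^ α :=
      stmt19_core hα0 ht ht6
    have hmain : |z₁| ^ α * (t / 4 * (t / 8) ^ α) ≤ ρ ^ α * ∫ u in (θ - t)..θ, |Real.sin u| ^ α := by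
      apply mul_le_mul (Real.rpow_le_rpow (abs_nonneg _) hρz hα0.le) hI (by positivity)
        (by positivity)
    refine le_trans ?_ hmain
    -- arithmetic: (1/256)(t^{1+α}X + tY) ≤ X * (t/4)(t/8)^α
    set X := |z₁| ^ α with hX
    have hX0 : 0 ≤ X := Real.rpow_nonneg (abs_nonneg _) _
    have e1 : (t / 8) ^ α = t ^ α / 8 ^ α := Real.div_rpow ht.le (by norm_num) α
    have e2 : (8 : ℝ) ^ α ≤ 8 := by
      calc (8:ℝ) ^ α ≤ 8 ^ (1:ℝ) := Real.rpow_le_rpow_of_exponent_le (by norm_num) hα1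
        _ = 8 := Real.rpow_one 8
    have e3 : t ^ α / 8 ≤ (t / 8) ^ α := by
      rw [e1]
      gcongr
    have e4 : t * |z₂| ^ α ≤ 4 * (t ^ (1 + α) * X) := by
      have h1 : |z₂| ^ α ≤ (4 * t * |z₁|) ^ α :=
        Real.rpow_le_rpow (abs_nonneg _) hcase.le hα0.le
      have h2 : (4 * t * |z₁|) ^ α = (4 * t) ^ α * X := by
        rw [Real.mul_rpow (by positivity) (abs_nonneg _)]
      have h3 : ((4 : ℝ) * t) ^ α = 4 ^ α * t ^ α :=
        Real.mul_rpow (by norm_num) ht.le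
      have h4 : (4 : ℝ) ^ α ≤ 4 := by
        calc (4:ℝ) ^ α ≤ 4 ^ (1:ℝ) := Real.rpow_le_rpow_of_exponent_le (by norm_num) hα1
          _ = 4 := Real.rpow_one 4
      have h5 : |z₂| ^ α ≤ 4 * t ^ α * X := by
        calc |z₂| ^ α ≤ (4 * t * |z₁|) ^ α := h1
          _ = 4 ^ α * t ^ α * X := by rw [h2, h3]
          _ ≤ 4 * t ^ α * X := by
              nlinarith [mul_le_mul_of_nonneg_right h4
                (mul_nonneg (Real.rpow_nonneg ht.le α) hX0)]
      calc t * |z₂| ^ α ≤ t * (4 * t ^ α * X) := mul_le_mul_of_nonneg_left h5 ht.le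
        _ = 4 * (t ^ (1 + α) * X) := by rw [htα]; ring
    have e5 : 5 / 256 * (t ^ (1 + α) * X) ≤ X * (t / 4 * (t ^ α / 8)) := by
      rw [htα]
      nlinarith [mul_nonneg (mul_nonneg ht.le (Real.rpow_nonneg ht.le α)) hX0]
    have e6 : X * (t / 4 * (t ^ α / 8)) ≤ X * (t / 4 * (t / 8) ^ α) := by
      apply mul_le_mul_of_nonneg_left _ hX0
      apply mul_le_mul_of_nonneg_left e3 (by linarith)
    linarith [e4, e5, e6]

lemma stmt19_intK {α : ℝ} (hα : 0 < α) :
    Integrable fun x : ℝ => Real.exp (-|x| ^ α) := by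
  set n : ℕ := ⌈2 / α⌉₊ + 2 with hn
  set N : ℝ := (Nat.factorial n : ℝ) with hN
  have hn2 : (2 : ℝ) ≤ α * n := by
    have h1 : 2 / α ≤ (n : ℝ) := by
      calc (2 / α : ℝ) ≤ ⌈2 / α⌉₊ := Nat.le_ceil _
        _ ≤ (n : ℝ) := by rw [hn]; push_cast; linarith
    calc (2:ℝ) = α * (2 / α) := by field_simp
      _ ≤ α * n := mul_le_mul_of_nonneg_left h1 hα.le
  have hfact : (1 : ℝ) ≤ N := by
    rw [hN]; exact_mod_cast Nat.one_le_iff_ne_zero.mpr (Nat.factorial_ne_zero n)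
  refine Integrable.mono' ((integrable_inv_one_add_sq).const_mul (2 * N))
    ?_ (ae_of_all _ fun x => ?_)
  · exact (Real.continuous_exp.comp
      ((continuous_abs.rpow_const fun x => Or.inr hα.le).neg)).aestronglyMeasurable
  · rw [Real.norm_eq_abs, abs_of_pos (Real.exp_pos _)]
    set u := |x| ^ α with hu
    have hu0 : 0 ≤ u := Real.rpow_nonneg (abs_nonneg x) α
    have hexp : u ^ n / N ≤ Real.exp u := by
      have hsum := Real.sum_le_exp_of_nonneg hu0 (n + 1)
      have hsingle : u ^ n / (Nat.factorial n : ℝ) ≤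
          ∑ i ∈ Finset.range (n + 1), u ^ i / (Nat.factorial i : ℝ) := by
        apply Finset.single_le_sum (f := fun i => u ^ i / (Nat.factorial i : ℝ))
          (fun i _ => by positivity) (Finset.self_mem_range_succ n)
      calc u ^ n / N = u ^ n / (Nat.factorial n : ℝ) := by rw [hN]
        _ ≤ ∑ i ∈ Finset.range (n + 1), u ^ i / (Nat.factorial i : ℝ) := hsingle
        _ ≤ Real.exp u := hsum
    have hN0 : (0:ℝ) < N := by linarith
    have hbound : 1 + x ^ 2 ≤ 2 * N * Real.exp u := by
      rcases le_total (|x|) 1 with hx | hx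
      · have h1 : x ^ 2 ≤ 1 := by nlinarith [abs_nonneg x, sq_abs x]
        have h2 : (1 : ℝ) ≤ Real.exp u := Real.one_le_exp hu0
        nlinarith
      · have h1 : x ^ 2 ≤ u ^ n := by
          have e1 : x ^ 2 = |x| ^ (2 : ℝ) := by
            rw [Real.rpow_two, sq_abs]
          have e2 : u ^ n = |x| ^ (α * n) := by
            rw [hu, ← Real.rpow_natCast (|x| ^ α) n, ← Real.rpow_mul (abs_nonneg x)]
          rw [e1, e2]
          exact Real.rpow_le_rpow_of_exponent_le hx hn2
        have h2 : (1 : ℝ) ≤ u ^ n := by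
          have : (1:ℝ) ≤ x ^ 2 := by nlinarith [sq_abs x]
          linarith
        have h3 : u ^ n ≤ N * Real.exp u := by
          rw [div_le_iff₀ hN0] at hexp
          linarith [hexp]
        nlinarith
    have hx2 : (0:ℝ) < 1 + x ^ 2 := by positivity
    have hkey : Real.exp (-u) * (1 + x ^ 2) ≤ 2 * N := by
      rw [Real.exp_neg, inv_mul_le_iff₀ (Real.exp_pos u), mul_comm (Real.exp u)]
      exact hbound
    have e : 2 * N * (1 + x ^ 2)⁻¹ = 2 * N / (1 + x ^ 2) := by rw [div_eq_mul_inv]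
    rw [e, le_div_iff₀ hx2]
    exact hkey

lemma stmt19_scale {α A : ℝ} (hα : 0 < α) (hA : 0 < A) :
    (∀ x : ℝ, Real.exp (-(A * |x| ^ α)) = Real.exp (-|A ^ (1/α) * x| ^ α)) ∧
    Integrable (fun x : ℝ => Real.exp (-(A * |x| ^ α))) ∧
    ∫ x : ℝ, Real.exp (-(A * |x| ^ α)) = A ^ (-(1/α)) * ∫ y : ℝ, Real.exp (-|y| ^ α) := by
  have ha : (0:ℝ) < A ^ (1/α) := Real.rpow_pos_of_pos hA _
  have hpt : ∀ x : ℝ, Real.exp (-(A * |x| ^ α)) = Real.exp (-|A ^ (1/α) * x| ^ α) := by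
    intro x
    congr 1
    rw [abs_mul, abs_of_pos ha, Real.mul_rpow ha.le (abs_nonneg x),
      ← Real.rpow_mul hA.le, show (1/α) * α = 1 by field_simp, Real.rpow_one]
  refine ⟨hpt, ?_, ?_⟩
  · have := (stmt19_intK hα).comp_mul_left' (R := A ^ (1/α)) ha.ne'
    refine this.congr ?_
    exact ae_of_all _ fun x => (hpt x).symm
  · have h := MeasureTheory.Measure.integral_comp_mul_left
      (fun y : ℝ => Real.exp (-|y| ^ α)) (A ^ (1/α))
    simp only [smul_eq_mul] at h
    calc ∫ x : ℝ, Real.exp (-(A * |x| ^ α))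
        = ∫ x : ℝ, Real.exp (-|A ^ (1/α) * x| ^ α) := by
          congr 1; funext x; exact hpt x
      _ = |(A ^ (1/α))⁻¹| * ∫ y : ℝ, Real.exp (-|y| ^ α) := h
      _ = A ^ (-(1/α)) * ∫ y : ℝ, Real.exp (-|y| ^ α) := by
          rw [abs_of_pos (inv_pos.mpr ha), ← Real.rpow_neg hA.le]

/-- For `0 < α₁ < α₂ ≤ 1` there is `c > 0`, depending only on `α₁, α₂`,
such that for all `t ∈ (0, π/6]`,
`(1/(2π)²) ∫_{ℝ²} exp(−∫_{−t}^0 (|z₁ cos r − z₂ sin r|^{α₁} + |z₁ sin r + z₂ cos r|^{α₂}) dr) dz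
   ≤ c t^{−1−2/α₂}`;
in particular this quantity divided by `t^{−1/α₁−1/α₂}` is at most `c t^{1/α₁ − 1/α₂ − 1}`. -/
theorem stmt19 (α₁ α₂ : ℝ) (h₁ : 0 < α₁) (h₁₂ : α₁ < α₂) (h₂ : α₂ ≤ 1) :
    ∃ c > 0, ∀ t : ℝ, 0 < t → t ≤ π / 6 →
      (1 / (2 * π) ^ 2) *
        (∫ z : ℝ × ℝ, Real.exp (-(∫ r in (-t)..(0:ℝ),
          (|z.1 * Real.cos r - z.2 * Real.sin r| ^ α₁ +
           |z.1 * Real.sin r + z.2 * Real.cos r| ^ α₂))))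
        ≤ c * t ^ (-1 - 2 / α₂)
      ∧ (1 / (2 * π) ^ 2) *
        (∫ z : ℝ × ℝ, Real.exp (-(∫ r in (-t)..(0:ℝ),
          (|z.1 * Real.cos r - z.2 * Real.sin r| ^ α₁ +
           |z.1 * Real.sin r + z.2 * Real.cos r| ^ α₂))))
        / t ^ (-(1 / α₁) - 1 / α₂)
        ≤ c * t ^ (1 / α₁ - 1 / α₂ - 1) := by
  have hα0 : 0 < α₂ := h₁.trans h₁₂
  set K : ℝ := ∫ y : ℝ, Real.exp (-|y| ^ α₂) with hK
  have hK0 : 0 ≤ K := integral_nonneg fun y => (Real.exp_pos _).le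
  set D : ℝ := (1/256 : ℝ) ^ (-(2/α₂)) * K ^ 2 with hD
  have hD0 : 0 ≤ D := by positivity
  refine ⟨D + 1, by linarith, fun t ht ht6 => ?_⟩
  have hπ : (3:ℝ) < π := Real.pi_gt_three
  -- the two scaling constants
  set A : ℝ := 1/256 * t ^ (1 + α₂) with hA
  set B : ℝ := 1/256 * t with hB
  have hApos : 0 < A := by
    have := Real.rpow_pos_of_pos ht (1 + α₂); positivity
  have hBpos : 0 < B := by positivity
  obtain ⟨-, hAint, hAval⟩ := stmt19_scale hα0 hApos
  obtain ⟨-, hBint, hBval⟩ := stmt19_scale hα0 hBpos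
  -- pointwise bound
  have hpt : ∀ z : ℝ × ℝ,
      Real.exp (-(∫ r in (-t)..(0:ℝ),
          (|z.1 * Real.cos r - z.2 * Real.sin r| ^ α₁ +
           |z.1 * Real.sin r + z.2 * Real.cos r| ^ α₂)))
        ≤ Real.exp (-(A * |z.1| ^ α₂)) * Real.exp (-(B * |z.2| ^ α₂)) := by
    intro z
    have hc1 : Continuous fun r : ℝ => |z.1 * Real.cos r - z.2 * Real.sin r| ^ α₁ :=
      ((continuous_const.mul Real.continuous_cos).sub
        (continuous_const.mul Real.continuous_sin)).abs.rpow_const fun x => Or.inr h₁.le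
    have hc2 : Continuous fun r : ℝ => |z.1 * Real.sin r + z.2 * Real.cos r| ^ α₂ :=
      ((continuous_const.mul Real.continuous_sin).add
        (continuous_const.mul Real.continuous_cos)).abs.rpow_const fun x => Or.inr hα0.le
    have hFS : (∫ r in (-t)..(0:ℝ), |z.1 * Real.sin r + z.2 * Real.cos r| ^ α₂)
        ≤ ∫ r in (-t)..(0:ℝ),
          (|z.1 * Real.cos r - z.2 * Real.sin r| ^ α₁ +
           |z.1 * Real.sin r + z.2 * Real.cos r| ^ α₂) := by
      apply intervalIntegral.integral_mono_on (by linarith)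
        (hc2.intervalIntegrable _ _) ((hc1.add hc2).intervalIntegrable _ _)
      intro r _
      exact le_add_of_nonneg_left (by positivity)
    have hkey := stmt19_key hα0 h₂ ht ht6 z.1 z.2
    rw [← Real.exp_add]
    apply Real.exp_le_exp.mpr
    have : A * |z.1| ^ α₂ + B * |z.2| ^ α₂
        ≤ ∫ r in (-t)..(0:ℝ),
          (|z.1 * Real.cos r - z.2 * Real.sin r| ^ α₁ +
           |z.1 * Real.sin r + z.2 * Real.cos r| ^ α₂) := by
      rw [hA, hB]
      calc 1/256 * t ^ (1 + α₂) * |z.1| ^ α₂ + 1/256 * t * |z.2| ^ α₂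
          = 1 / 256 * (t ^ (1 + α₂) * |z.1| ^ α₂) + 1 / 256 * (t * |z.2| ^ α₂) := by ring
        _ ≤ _ := hkey.trans hFS
    linarith
  -- integrability of the majorant
  have hGint : Integrable (fun z : ℝ × ℝ =>
      Real.exp (-(A * |z.1| ^ α₂)) * Real.exp (-(B * |z.2| ^ α₂))) := by
    rw [show (volume : Measure (ℝ × ℝ)) = volume.prod volume from
      MeasureTheory.Measure.volume_eq_prod ℝ ℝ]
    exact hAint.mul_prod hBint
  have hmono : (∫ z : ℝ × ℝ, Real.exp (-(∫ r in (-t)..(0:ℝ),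
          (|z.1 * Real.cos r - z.2 * Real.sin r| ^ α₁ +
           |z.1 * Real.sin r + z.2 * Real.cos r| ^ α₂))))
      ≤ ∫ z : ℝ × ℝ, Real.exp (-(A * |z.1| ^ α₂)) * Real.exp (-(B * |z.2| ^ α₂)) :=
    integral_mono_of_nonneg (ae_of_all _ fun z => (Real.exp_pos _).le) hGint
      (ae_of_all _ hpt)
  have hGval : (∫ z : ℝ × ℝ, Real.exp (-(A * |z.1| ^ α₂)) * Real.exp (-(B * |z.2| ^ α₂)))
      = (A ^ (-(1/α₂)) * K) * (B ^ (-(1/α₂)) * K) := by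
    rw [show (volume : Measure (ℝ × ℝ)) = volume.prod volume from
      MeasureTheory.Measure.volume_eq_prod ℝ ℝ]
    rw [MeasureTheory.integral_prod_mul (fun x : ℝ => Real.exp (-(A * |x| ^ α₂)))
      (fun y : ℝ => Real.exp (-(B * |y| ^ α₂))), hAval, hBval]
  have hfinal : (A ^ (-(1/α₂)) * K) * (B ^ (-(1/α₂)) * K) = D * t ^ (-1 - 2/α₂) := by
    have hA2 : A ^ (-(1/α₂)) = (1/256:ℝ) ^ (-(1/α₂)) * t ^ ((1 + α₂) * (-(1/α₂))) := by
      rw [hA, Real.mul_rpow (by norm_num) (Real.rpow_nonneg ht.le _),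
        ← Real.rpow_mul ht.le]
    have hB2 : B ^ (-(1/α₂)) = (1/256:ℝ) ^ (-(1/α₂)) * t ^ (-(1/α₂)) :=
      Real.mul_rpow (by norm_num) ht.le
    have ec : (1/256:ℝ) ^ (-(2/α₂)) = (1/256:ℝ) ^ (-(1/α₂)) * (1/256:ℝ) ^ (-(1/α₂)) := by
      rw [← Real.rpow_add (by norm_num : (0:ℝ) < 1/256)]; congr 1; ring
    have et : t ^ ((1 + α₂) * (-(1/α₂))) * t ^ (-(1/α₂)) = t ^ (-1 - 2/α₂) := by
      rw [← Real.rpow_add ht]; congr 1; field_simp; ring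
    rw [hA2, hB2, hD, ec, ← et]; ring
  -- put it together
  have hI0 : 0 ≤ ∫ z : ℝ × ℝ, Real.exp (-(∫ r in (-t)..(0:ℝ),
          (|z.1 * Real.cos r - z.2 * Real.sin r| ^ α₁ +
           |z.1 * Real.sin r + z.2 * Real.cos r| ^ α₂))) :=
    integral_nonneg fun z => (Real.exp_pos _).le
  have hfrac : (1 / (2 * π) ^ 2 : ℝ) ≤ 1 := by
    rw [div_le_one (by positivity)]; nlinarith
  have htpow : 0 < t ^ (-1 - 2/α₂) := Real.rpow_pos_of_pos ht _
  have hpart1 : (1 / (2 * π) ^ 2) *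
        (∫ z : ℝ × ℝ, Real.exp (-(∫ r in (-t)..(0:ℝ),
          (|z.1 * Real.cos r - z.2 * Real.sin r| ^ α₁ +
           |z.1 * Real.sin r + z.2 * Real.cos r| ^ α₂))))
        ≤ (D + 1) * t ^ (-1 - 2 / α₂) := by
    calc (1 / (2 * π) ^ 2) * _ ≤ 1 * (∫ z : ℝ × ℝ, Real.exp (-(∫ r in (-t)..(0:ℝ),
          (|z.1 * Real.cos r - z.2 * Real.sin r| ^ α₁ +
           |z.1 * Real.sin r + z.2 * Real.cos r| ^ α₂)))) :=
        mul_le_mul_of_nonneg_right hfrac hI0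
      _ = _ := one_mul _
      _ ≤ D * t ^ (-1 - 2/α₂) := by rw [← hfinal, ← hGval]; exact hmono
      _ ≤ (D + 1) * t ^ (-1 - 2/α₂) := by nlinarith
  refine ⟨hpart1, ?_⟩
  have hden : 0 < t ^ (-(1/α₁) - 1/α₂) := Real.rpow_pos_of_pos ht _
  calc _ ≤ (D + 1) * t ^ (-1 - 2/α₂) / t ^ (-(1/α₁) - 1/α₂) :=
        div_le_div_of_nonneg_right hpart1 hden.le
    _ = (D + 1) * t ^ (1/α₁ - 1/α₂ - 1) := by
        rw [mul_div_assoc, ← Real.rpow_sub ht]; congr 2; ring
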